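/- Let {y_k, w_k} be the sequences generated by the GFDPG method. Then for any k ≥ 1, q̃(y_k) − q̃(y_*) ≤ L_k·‖y_0 − y_*‖² / (2·T_{k−1}). -/

import Mathlib

open scoped RealInnerProductSpace

lemma gfdpg_grad_lower {V : Type*} [NormedAddCommGroup V] [InnerProductSpace ℝ V]
    [CompleteSpace V]
    (F : V → ℝ) (hF : ConvexOn ℝ Set.univ F) {g w : V} (h : HasGradientAt F g w) (x : V) :
    F w + ⟪x - w, g⟫ ≤ F x := by
  have hline : HasDerivAt (fun s : ℝ => w + s • (x - w)) (x - w) 0 := by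
    simpa using ((hasDerivAt_id (0:ℝ)).smul_const (x - w)).const_add w
  have hφ : HasDerivAt (fun s : ℝ => F (w + s • (x - w))) ⟪g, x - w⟫ 0 := by
    have hF2 : HasFDerivAt F ((InnerProductSpace.toDual ℝ V) g) (w + (0:ℝ) • (x - w)) := by simpa using h.hasFDerivAt
    have := hF2.comp_hasDerivAt (0:ℝ) hline
    simpa [InnerProductSpace.toDual_apply_apply, Function.comp_def] using this
  have hconv : ConvexOn ℝ Set.univ (fun s : ℝ => F (w + s • (x - w))) := by
    have h2 := hF.comp_affineMap (AffineMap.lineMap w x)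
    have h3 : (fun s : ℝ => F (w + s • (x - w))) = F ∘ (AffineMap.lineMap w x) := by
      funext s
      simp [AffineMap.lineMap_apply, add_comm]
    rw [h3]
    simpa using h2
  have hs := hconv.le_slope_of_hasDerivAt (Set.mem_univ 0) (Set.mem_univ 1)
    (by norm_num) hφ
  have h2 : ⟪g, x - w⟫ ≤ F x - F w := by
    simpa [slope_def_field] using hs
  rw [real_inner_comm]
  linarith

lemma gfdpg_combo_norm_sq {V : Type*} [NormedAddCommGroup V] [InnerProductSpace ℝ V]
    (θ : ℝ) (u v : V) :
    ‖(1-θ) • u + θ • v‖^2 = (1-θ)*‖u‖^2 + θ*‖v‖^2 - θ*(1-θ)*‖u-v‖^2 := by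
  have h : ∀ a : V, ‖a‖^2 = ⟪a,a⟫ := fun a => (real_inner_self_eq_norm_sq a).symm
  rw [h, h, h, h]
  simp only [inner_add_left, inner_add_right, inner_sub_left, inner_sub_right,
    real_inner_smul_left, real_inner_smul_right, real_inner_comm u v]
  ring

lemma gfdpg_prox_key {V : Type*} [NormedAddCommGroup V] [InnerProductSpace ℝ V]
    (F G : V → ℝ) (hG : ConvexOn ℝ Set.univ G) (g w : V)
    (hFlow : ∀ x, F w + ⟪x - w, g⟫ ≤ F x) (L : ℝ) (hL : 0 < L) (p : V)
    (hmin : IsMinOn (fun y => F w + ⟪y - w, g⟫ + L / 2 * ‖y - w‖^2 + G y) Set.univ p)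
    (hdesc : F p + G p ≤ F w + ⟪p - w, g⟫ + L / 2 * ‖p - w‖^2 + G p) (x : V) :
    ‖x - p‖^2 - ‖x - w‖^2 ≤ 2 / L * ((F x + G x) - (F p + G p)) := by
  set Q : V → ℝ := fun y => F w + ⟪y - w, g⟫ + L / 2 * ‖y - w‖^2 + G y with hQ
  clear_value Q
  -- strong minimality of p
  have hsc : Q p + L / 2 * ‖x - p‖^2 ≤ Q x := by
    have key : ∀ θ : ℝ, 0 < θ → θ ≤ 1 → Q p + L/2 * ‖x - p‖^2 ≤ Q x + θ * (L/2 * ‖p - x‖^2) := by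
      intro θ hθ hθ1
      set z : V := (1-θ) • p + θ • x with hz
      have hGz : G z ≤ (1-θ) * G p + θ * G x :=
        hG.2 (Set.mem_univ p) (Set.mem_univ x) (by linarith) (le_of_lt hθ) (by ring)
      have hzw : z - w = (1-θ) • (p - w) + θ • (x - w) := by
        rw [hz]; module
      have hnz : ‖z - w‖^2 = (1-θ)*‖p-w‖^2 + θ*‖x-w‖^2 - θ*(1-θ)*‖(p-w)-(x-w)‖^2 := by
        rw [hzw]; exact gfdpg_combo_norm_sq θ (p-w) (x-w)
      have hpx : (p - w) - (x - w) = p - x := by abel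
      have hinz : ⟪z - w, g⟫ = (1-θ)*⟪p-w,g⟫ + θ*⟪x-w,g⟫ := by
        rw [hzw, inner_add_left, real_inner_smul_left, real_inner_smul_left]
      have hQz : Q z ≤ (1-θ) * Q p + θ * Q x - L/2*θ*(1-θ)*‖p-x‖^2 := by
        simp only [hQ]
        rw [hinz, hnz, hpx]
        nlinarith [hGz]
      have hmz : Q p ≤ Q z := hmin (Set.mem_univ z)
      have hxp : ‖x - p‖ = ‖p - x‖ := norm_sub_rev _ _
      have h8 : θ * (Q p - Q x) ≤ θ * (-(L/2*(1-θ)*‖p-x‖^2)) := by nlinarith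
      have h9 : Q p - Q x ≤ -(L/2*(1-θ)*‖p-x‖^2) := le_of_mul_le_mul_left h8 hθ
      rw [hxp]
      nlinarith
    have hc : 0 ≤ L/2 * ‖p - x‖^2 := by positivity
    refine le_of_forall_pos_le_add (fun ε hε => ?_)
    have hθpos : 0 < min 1 (ε / (L/2 * ‖p - x‖^2 + 1)) := by positivity
    have hθ1 : min 1 (ε / (L/2 * ‖p - x‖^2 + 1)) ≤ 1 := min_le_left _ _
    have h2 := key _ hθpos hθ1
    have h3 : min 1 (ε / (L/2 * ‖p - x‖^2 + 1)) * (L/2 * ‖p - x‖^2) ≤ ε := by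
      have h4 : min 1 (ε / (L/2 * ‖p - x‖^2 + 1)) ≤ ε / (L/2 * ‖p - x‖^2 + 1) :=
        min_le_right _ _
      have h5 : ε / (L/2 * ‖p - x‖^2 + 1) * (L/2 * ‖p - x‖^2) ≤ ε := by
        rw [div_mul_eq_mul_div, div_le_iff₀ (by positivity)]
        nlinarith
      calc min 1 (ε / (L/2 * ‖p - x‖^2 + 1)) * (L/2 * ‖p - x‖^2)
          ≤ ε / (L/2 * ‖p - x‖^2 + 1) * (L/2 * ‖p - x‖^2) :=
            mul_le_mul_of_nonneg_right h4 hc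
        _ ≤ ε := h5
    linarith
  -- combine
  have hQx : Q x ≤ F x + G x + L/2 * ‖x - w‖^2 := by
    have := hFlow x
    simp only [hQ]
    linarith
  have hstep : L/2 * (‖x - p‖^2 - ‖x - w‖^2) ≤ (F x + G x) - (F p + G p) := by
    have : F p + G p ≤ Q p := by rw [hQ]; exact hdesc
    have e1 : L/2 * (‖x - p‖^2 - ‖x - w‖^2) = L/2*‖x - p‖^2 - L/2*‖x - w‖^2 := by ring
    rw [e1]
    linarith
  have h6 := mul_le_mul_of_nonneg_left hstep (le_of_lt (by positivity : (0:ℝ) < 2/L))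
  calc ‖x - p‖^2 - ‖x - w‖^2 = 2/L * (L/2 * (‖x - p‖^2 - ‖x - w‖^2)) := by
        field_simp
    _ ≤ 2/L * ((F x + G x) - (F p + G p)) := h6

lemma gfdpg_step_ineq {V : Type*} [NormedAddCommGroup V] [InnerProductSpace ℝ V]
    (q : V → ℝ) (hq : ConvexOn ℝ Set.univ q) (ys : V) (hys : ∀ z, q ys ≤ q z)
    (yk wk yk1 uk uk1 : V) (tk Tk L : ℝ)
    (htk : 0 < tk) (hTk : 0 < Tk) (htkT : tk ≤ Tk) (htksq : tk^2 ≤ Tk) (hL : 0 < L)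
    (hwk : wk = ((Tk - tk)/Tk) • yk + (tk/Tk) • uk)
    (huk1 : uk1 = uk + tk • (yk1 - wk))
    (hkey : ∀ x, ‖x - yk1‖^2 - ‖x - wk‖^2 ≤ 2 / L * (q x - q yk1)) :
    2*Tk*(q yk1 - q ys) + L*‖ys - uk1‖^2 ≤ 2*(Tk - tk)*(q yk - q ys) + L*‖ys - uk‖^2 := by
  set lam : ℝ := tk / Tk with hlam
  have hlam0 : 0 < lam := by positivity
  have hlam1 : lam ≤ 1 := by rw [hlam, div_le_one hTk]; exact htkT
  set xc : V := (1 - lam) • yk + lam • ys with hxc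
  set e : V := ys - uk with he
  set d : V := yk1 - wk with hd
  have h1 := hkey xc
  have h2 : q xc ≤ (1 - lam) * q yk + lam * q ys :=
    hq.2 (Set.mem_univ yk) (Set.mem_univ ys) (by linarith) (le_of_lt hlam0) (by ring)
  have h3 : xc - wk = lam • e := by
    rw [hxc, hwk, he, hlam]
    match_scalars <;> field_simp <;> ring
  have h4 : xc - yk1 = lam • e - d := by
    rw [hd]
    have : xc - yk1 = (xc - wk) - (yk1 - wk) := by abel
    rw [this, h3]
  have hn1 : ‖xc - wk‖^2 = lam^2 * ‖e‖^2 := by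
    rw [h3, norm_smul, mul_pow, Real.norm_eq_abs, sq_abs]
  have hn2 : ‖xc - yk1‖^2 = lam^2 * ‖e‖^2 - 2*(lam * ⟪e, d⟫) + ‖d‖^2 := by
    rw [h4, norm_sub_sq_real, norm_smul, mul_pow, Real.norm_eq_abs, sq_abs,
      real_inner_smul_left]
  have hn3 : ‖ys - uk1‖^2 = ‖e‖^2 - 2*(tk * ⟪e, d⟫) + tk^2 * ‖d‖^2 := by
    have h5 : ys - uk1 = e - tk • d := by rw [huk1, he, hd]; abel
    rw [h5, norm_sub_sq_real, norm_smul, mul_pow, Real.norm_eq_abs, sq_abs,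
      real_inner_smul_right]
  -- from h1, hn1, hn2 : ‖d‖^2 - 2*(lam*⟪e,d⟫) ≤ 2/L*(q xc - q yk1)
  have h6 : ‖d‖^2 - 2*(lam * ⟪e, d⟫) ≤ 2/L * (q xc - q yk1) := by
    rw [hn1, hn2] at h1; linarith
  -- multiply by Tk : note Tk * lam = tk
  have hTl : Tk * lam = tk := by rw [hlam]; field_simp
  have h7 : Tk * (‖d‖^2 - 2*(lam * ⟪e, d⟫)) ≤ Tk * (2/L * (q xc - q yk1)) :=
    mul_le_mul_of_nonneg_left h6 (le_of_lt hTk)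
  have h8 : Tk * ‖d‖^2 - 2*(tk * ⟪e, d⟫) ≤ 2/L * (Tk * q xc - Tk * q yk1) := by
    have : Tk * (‖d‖^2 - 2*(lam * ⟪e, d⟫)) = Tk * ‖d‖^2 - 2*((Tk*lam) * ⟪e, d⟫) := by ring
    rw [this, hTl] at h7
    calc Tk * ‖d‖^2 - 2*(tk * ⟪e, d⟫) ≤ Tk * (2/L * (q xc - q yk1)) := h7
      _ = 2/L * (Tk * q xc - Tk * q yk1) := by ring
  -- bound Tk * q xc
  have h9 : Tk * q xc ≤ (Tk - tk) * q yk + tk * q ys := by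
    have := mul_le_mul_of_nonneg_left h2 (le_of_lt hTk)
    calc Tk * q xc ≤ Tk * ((1 - lam) * q yk + lam * q ys) := this
      _ = (Tk - Tk*lam) * q yk + (Tk*lam) * q ys := by ring
      _ = (Tk - tk) * q yk + tk * q ys := by rw [hTl]
  -- multiply h8 by L and combine
  have h10 : L * (Tk * ‖d‖^2 - 2*(tk * ⟪e, d⟫)) ≤ 2 * (Tk * q xc - Tk * q yk1) := by
    have := mul_le_mul_of_nonneg_left h8 (le_of_lt hL)
    calc L * (Tk * ‖d‖^2 - 2*(tk * ⟪e, d⟫)) ≤ L * (2/L * (Tk * q xc - Tk * q yk1)) := this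
      _ = 2 * (Tk * q xc - Tk * q yk1) := by field_simp
  have hd2 : 0 ≤ ‖d‖^2 := sq_nonneg _
  have hq1 : q ys ≤ q yk1 := hys yk1
  -- goal: 2*Tk*(q yk1 - q ys) + L*‖ys-uk1‖^2 ≤ 2*(Tk-tk)*(q yk - q ys) + L*‖e‖^2
  rw [hn3]
  nlinarith [mul_le_mul_of_nonneg_left (sub_nonneg.mpr htksq) (le_of_lt hL),
    mul_le_mul_of_nonneg_right (mul_le_mul_of_nonneg_left (sub_nonneg.mpr htksq) (le_of_lt hL)) hd2]


/-- Let `{y_k, w_k}` be the sequences generated by the GFDPG method. Then for any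
`k ≥ 1`, `q̃(y_k) − q̃(y_*) ≤ L_k·‖y_0 − y_*‖² / (2·T_{k−1})`, where `q̃ := F + G`. -/
theorem gfdpg_dual_cost_bound
    {V : Type*} [NormedAddCommGroup V] [InnerProductSpace ℝ V] [FiniteDimensional ℝ V]
    (F G : V → ℝ) (LF : ℝ)
    (hF : ConvexOn ℝ Set.univ F) (hG : ConvexOn ℝ Set.univ G)
    (F' : V → V) (hF' : ∀ y, HasGradientAt F (F' y) y)
    (hLip : ∀ y w : V, ‖F' y - F' w‖ ≤ LF * ‖y - w‖)
    -- q̃ := F + G attains its minimum at y_*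
    (ystar : V) (hystar : ∀ y, F ystar + G ystar ≤ F y + G y)
    -- p_L(w) : the unique minimizer over y of Q_L(y, w)
    (P : ℝ → V → V)
    (hP : ∀ L, 0 < L → ∀ w, IsMinOn
      (fun y => F w + ⟪y - w, F' w⟫ + L / 2 * ‖y - w‖^2 + G y) Set.univ (P L w))
    -- the GFDPG method
    (y w : ℕ → V) (t T Lk : ℕ → ℝ)
    (hw0 : w 0 = y 0) (hL0 : 0 < Lk 0)
    (ht0 : t 0 = T 0) (ht0pos : 0 < t 0) (ht0le : t 0 ≤ 1)
    (hT : ∀ k : ℕ, T k = ∑ i ∈ Finset.range (k+1), t i)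
    (hLmono : ∀ k : ℕ, Lk k ≤ Lk (k+1))
    (hdesc : ∀ k : ℕ,
      F (P (Lk (k+1)) (w k)) + G (P (Lk (k+1)) (w k)) ≤
        F (w k) + ⟪P (Lk (k+1)) (w k) - w k, F' (w k)⟫
          + Lk (k+1) / 2 * ‖P (Lk (k+1)) (w k) - w k‖^2 + G (P (Lk (k+1)) (w k)))
    (hy : ∀ k : ℕ, y (k+1) = P (Lk (k+1)) (w k))
    (htpos : ∀ k : ℕ, 0 < t (k+1)) (htsq : ∀ k : ℕ, t (k+1) ^ 2 ≤ T (k+1))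
    (hw : ∀ k : ℕ, w (k+1) = y (k+1)
      + (((T k - t k) * t (k+1)) / (t k * T (k+1))) • (y (k+1) - y k)
      + (((t k ^ 2 - T k) * t (k+1)) / (t k * T (k+1))) • (y (k+1) - w k))
    (k : ℕ) (hk : 1 ≤ k) :
    (F (y k) + G (y k)) - (F ystar + G ystar)
      ≤ Lk k * ‖y 0 - ystar‖^2 / (2 * T (k-1)) := by
  -- basic positivity facts
  have ht : ∀ n : ℕ, 0 < t n := by rintro (_|n); exacts [ht0pos, htpos n]
  have hTpos : ∀ n : ℕ, 0 < T n := by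
    intro n; rw [hT]
    exact Finset.sum_pos (fun i _ => ht i) ⟨0, Finset.mem_range.2 (Nat.succ_pos n)⟩
  have hTsucc : ∀ n : ℕ, T (n+1) = T n + t (n+1) := by
    intro n; rw [hT, hT, Finset.sum_range_succ]
  have htleT : ∀ n : ℕ, t n ≤ T n := by
    rintro (_|n)
    · exact le_of_eq ht0
    · rw [hTsucc n]; linarith [hTpos n]
  have hLpos : ∀ n : ℕ, 0 < Lk n := by
    intro n; induction n with
    | zero => exact hL0
    | succ n ih => exact lt_of_lt_of_le ih (hLmono n)
  -- q and its convexity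
  set q : V → ℝ := fun x => F x + G x with hqdef
  have hqconv : ConvexOn ℝ Set.univ q := hF.add hG
  have hqmin : ∀ z, q ystar ≤ q z := hystar
  -- the key prox inequality at each step
  have hkey : ∀ n : ℕ, ∀ x : V, ‖x - y (n+1)‖^2 - ‖x - w n‖^2
      ≤ 2 / Lk (n+1) * (q x - q (y (n+1))) := by
    intro n x
    rw [hy n]
    exact gfdpg_prox_key F G hG (F' (w n)) (w n)
      (fun z => gfdpg_grad_lower F hF (hF' (w n)) z)
      (Lk (n+1)) (hLpos (n+1)) (P (Lk (n+1)) (w n))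
      (hP (Lk (n+1)) (hLpos (n+1)) (w n)) (hdesc n) x
  -- the auxiliary sequence u
  set u : ℕ → V := fun n => Nat.rec (y 0) (fun m um => um + t m • (y (m+1) - w m)) n with hu
  have hu0 : u 0 = y 0 := rfl
  have husucc : ∀ n : ℕ, u (n+1) = u n + t n • (y (n+1) - w n) := fun n => rfl
  -- w n is the convex combination of y n and u n
  have hwu : ∀ n : ℕ, w n = ((T n - t n)/T n) • y n + (t n / T n) • u n := by
    intro n; induction n with
    | zero =>
      rw [hw0, hu0, ← ht0]
      have h1 : (t 0 - t 0) / t 0 = 0 := by rw [sub_self, zero_div]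
      have h2 : t 0 / t 0 = 1 := div_self (ne_of_gt ht0pos)
      rw [h1, h2, zero_smul, one_smul, zero_add]
    | succ n ih =>
      rw [hw n, husucc n, ih]
      have h1 : t n ≠ 0 := ne_of_gt (ht n)
      have h2 : T n ≠ 0 := ne_of_gt (hTpos n)
      have h3 : T (n+1) ≠ 0 := ne_of_gt (hTpos (n+1))
      match_scalars <;> field_simp <;> ring
  -- main induction: the Lyapunov bound
  have main : ∀ m : ℕ, 2 * T m * (q (y (m+1)) - q ystar) + Lk (m+1) * ‖ystar - u (m+1)‖^2
      ≤ Lk (m+1) * ‖y 0 - ystar‖^2 := by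
    intro m; induction m with
    | zero =>
      -- base case
      simp only [Nat.reduceAdd]
      have hk0 := hkey 0 ystar
      simp only [Nat.reduceAdd] at hk0
      rw [hw0] at hk0
      have hu1 : ystar - u 1 = (1 - t 0) • (ystar - y 0) + t 0 • (ystar - y 1) := by
        have e : u 1 = u 0 + t 0 • (y 1 - w 0) := husucc 0
        rw [e, hu0, hw0]; module
      have hn : ‖ystar - u 1‖^2 = (1 - t 0)*‖ystar - y 0‖^2 + t 0*‖ystar - y 1‖^2
          - t 0*(1 - t 0)*‖(ystar - y 0) - (ystar - y 1)‖^2 := by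
        rw [hu1]; exact gfdpg_combo_norm_sq (t 0) _ _
      have hv1 : 0 ≤ q (y 1) - q ystar := by linarith [hqmin (y 1)]
      -- from hk0 : ‖ystar - y 1‖^2 - ‖ystar - y 0‖^2 ≤ 2/L1 * (q ystar - q (y 1))
      have hL1 := hLpos 1
      have hk0' : Lk 1 * (‖ystar - y 1‖^2 - ‖ystar - y 0‖^2) ≤ 2 * (q ystar - q (y 1)) := by
        have := mul_le_mul_of_nonneg_left hk0 (le_of_lt hL1)
        calc Lk 1 * (‖ystar - y 1‖^2 - ‖ystar - y 0‖^2)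
            ≤ Lk 1 * (2 / Lk 1 * (q ystar - q (y 1))) := this
          _ = 2 * (q ystar - q (y 1)) := by field_simp
      have hT0 : T 0 = t 0 := ht0.symm
      have hns : ‖y 0 - ystar‖^2 = ‖ystar - y 0‖^2 := by rw [norm_sub_rev]
      rw [hT0, hns, hn]
      nlinarith [sq_nonneg ‖(ystar - y 0) - (ystar - y 1)‖,
        mul_le_mul_of_nonneg_left hk0' (le_of_lt ht0pos),
        mul_nonneg (mul_nonneg (le_of_lt ht0pos) (sub_nonneg.mpr ht0le))
          (sq_nonneg ‖(ystar - y 0) - (ystar - y 1)‖),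
        mul_pos hL1 (mul_pos ht0pos (lt_of_lt_of_le ht0pos ht0le))]
    | succ m ih =>
      have hstep := gfdpg_step_ineq q hqconv ystar hqmin
        (y (m+1)) (w (m+1)) (y (m+2)) (u (m+1)) (u (m+2))
        (t (m+1)) (T (m+1)) (Lk (m+2))
        (ht (m+1)) (hTpos (m+1)) (htleT (m+1)) (htsq m) (hLpos (m+2))
        (hwu (m+1)) (husucc (m+1)) (hkey (m+1))
      -- T (m+1) - t (m+1) = T m
      have hTm : T (m+1) - t (m+1) = T m := by rw [hTsucc m]; ring
      rw [hTm] at hstep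
      have hvm : 0 ≤ q (y (m+1)) - q ystar := by linarith [hqmin (y (m+1))]
      have hTmpos := hTpos m
      have hLm := hLpos (m+1)
      have hLmono' := hLmono (m+1)
      -- from ih : Lk(m+1) * (R - ‖ystar - u(m+1)‖^2) ≥ 2*T m*v(m+1) ≥ 0, so R ≥ ‖…‖^2
      have hR : ‖ystar - u (m+1)‖^2 ≤ ‖y 0 - ystar‖^2 := by nlinarith
      nlinarith [mul_le_mul_of_nonneg_right hLmono'
        (sub_nonneg.mpr hR)]
  -- conclude
  obtain ⟨m, rfl⟩ : ∃ m, k = m + 1 := ⟨k - 1, (Nat.succ_pred_eq_of_pos hk).symm⟩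
  have h1 := main m
  have h2 : 0 ≤ Lk (m+1) * ‖ystar - u (m+1)‖^2 :=
    mul_nonneg (le_of_lt (hLpos (m+1))) (sq_nonneg _)
  have h3 : 2 * T m * (q (y (m+1)) - q ystar) ≤ Lk (m+1) * ‖y 0 - ystar‖^2 := by linarith
  have hTm := hTpos m
  have hsub : (m + 1) - 1 = m := rfl
  rw [hsub, le_div_iff₀ (by positivity : (0:ℝ) < 2 * T m)]
  calc (F (y (m+1)) + G (y (m+1)) - (F ystar + G ystar)) * (2 * T m)
      = 2 * T m * (q (y (m+1)) - q ystar) := by rw [hqdef]; ring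
    _ ≤ Lk (m+1) * ‖y 0 - ystar‖^2 := h3
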